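/- Let L1, L2, L3 be two-dimensional vector spaces over ℂ, and let L12 ⊂ L1 ⊗ L2 and L23 ⊂ L2 ⊗ L3 be two-dimensional linear subspaces. If the intersection (L12 ⊗ L3) ∩ (L1 ⊗ L23) inside L1 ⊗ L2 ⊗ L3 contains a non-zero vector, then there exist non-zero vectors x1 ∈ L1, x2 ∈ L2, x3 ∈ L3 such that x1 ⊗ x2 ∈ L12 and x2 ⊗ x3 ∈ L23 (so that the non-zero product vector x1 ⊗ x2 ⊗ x3 lies in (L12 ⊗ L3) ∩ (L1 ⊗ L23)). -/

import Mathlib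

open TensorProduct
open Module

/-- The subspace `L12 ⊗ L3` of `(L1 ⊗ L2) ⊗ L3`. -/
noncomputable def leftTensorSub {L1 L2 L3 : Type*} [AddCommGroup L1] [Module ℂ L1]
    [AddCommGroup L2] [Module ℂ L2] [AddCommGroup L3] [Module ℂ L3]
    (L12 : Submodule ℂ (L1 ⊗[ℂ] L2)) : Submodule ℂ ((L1 ⊗[ℂ] L2) ⊗[ℂ] L3) :=
  LinearMap.range (TensorProduct.mapIncl L12 (⊤ : Submodule ℂ L3))

/-- The subspace `L1 ⊗ L23` of `(L1 ⊗ L2) ⊗ L3`, transported along the associator. -/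
noncomputable def rightTensorSub {L1 L2 L3 : Type*} [AddCommGroup L1] [Module ℂ L1]
    [AddCommGroup L2] [Module ℂ L2] [AddCommGroup L3] [Module ℂ L3]
    (L23 : Submodule ℂ (L2 ⊗[ℂ] L3)) : Submodule ℂ ((L1 ⊗[ℂ] L2) ⊗[ℂ] L3) :=
  Submodule.map (TensorProduct.assoc ℂ L1 L2 L3).symm.toLinearMap
    (LinearMap.range (TensorProduct.mapIncl (⊤ : Submodule ℂ L1) L23))


section Aux
variable {M N : Type*} [AddCommGroup M] [Module ℂ M] [AddCommGroup N] [Module ℂ N]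

/-- Right contraction: `a ⊗ c ↦ ψ c • a`. -/
noncomputable def kR (ψ : N →ₗ[ℂ] ℂ) : M ⊗[ℂ] N →ₗ[ℂ] M :=
  (TensorProduct.rid ℂ M).toLinearMap ∘ₗ LinearMap.lTensor M ψ

/-- Left contraction: `a ⊗ c ↦ χ a • c`. -/
noncomputable def kL (χ : M →ₗ[ℂ] ℂ) : M ⊗[ℂ] N →ₗ[ℂ] N :=
  (TensorProduct.lid ℂ N).toLinearMap ∘ₗ LinearMap.rTensor N χ

@[simp] lemma kR_tmul (ψ : N →ₗ[ℂ] ℂ) (a : M) (c : N) : kR ψ (a ⊗ₜ[ℂ] c) = ψ c • a := by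
  simp [kR]

@[simp] lemma kL_tmul (χ : M →ₗ[ℂ] ℂ) (a : M) (c : N) : kL χ (a ⊗ₜ[ℂ] c) = χ a • c := by
  simp [kL]

lemma decompR (bN : Basis (Fin 2) ℂ N) (u : M ⊗[ℂ] N) :
    ∃ a0 a1 : M, u = a0 ⊗ₜ[ℂ] bN 0 + a1 ⊗ₜ[ℂ] bN 1 := by
  induction u using TensorProduct.induction_on with
  | zero => exact ⟨0, 0, by simp⟩
  | tmul a c =>
    refine ⟨bN.repr c 0 • a, bN.repr c 1 • a, ?_⟩
    have hc : c = bN.repr c 0 • bN 0 + bN.repr c 1 • bN 1 := by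
      have := bN.sum_repr c
      rw [Fin.sum_univ_two] at this
      exact this.symm
    rw [hc]
    simp [tmul_add, tmul_smul, smul_tmul]
  | add x y hx hy =>
    obtain ⟨a0, a1, hx⟩ := hx
    obtain ⟨b0, b1, hy⟩ := hy
    exact ⟨a0 + b0, a1 + b1, by rw [hx, hy]; simp [add_tmul]; abel⟩

lemma decompL (bM : Basis (Fin 2) ℂ M) (u : M ⊗[ℂ] N) :
    ∃ c0 c1 : N, u = bM 0 ⊗ₜ[ℂ] c0 + bM 1 ⊗ₜ[ℂ] c1 := by
  induction u using TensorProduct.induction_on with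
  | zero => exact ⟨0, 0, by simp⟩
  | tmul a c =>
    refine ⟨bM.repr a 0 • c, bM.repr a 1 • c, ?_⟩
    have ha : a = bM.repr a 0 • bM 0 + bM.repr a 1 • bM 1 := by
      have := bM.sum_repr a
      rw [Fin.sum_univ_two] at this
      exact this.symm
    rw [ha]
    simp [add_tmul, smul_tmul, tmul_smul]
  | add x y hx hy =>
    obtain ⟨a0, a1, hx⟩ := hx
    obtain ⟨b0, b1, hy⟩ := hy
    exact ⟨a0 + b0, a1 + b1, by rw [hx, hy]; simp [tmul_add]; abel⟩

lemma basis_lin2 (b : Basis (Fin 2) ℂ M) {p q : ℂ} (h : p • b 0 + q • b 1 = 0) :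
    p = 0 ∧ q = 0 := by
  have := b.linearIndependent
  rw [Fintype.linearIndependent_iff] at this
  have h2 := this ![p, q] (by rw [Fin.sum_univ_two]; simpa using h)
  exact ⟨h2 0, h2 1⟩

lemma basis_coords (b : Basis (Fin 2) ℂ M) (x : M) :
    x = b.repr x 0 • b 0 + b.repr x 1 • b 1 := by
  have := b.sum_repr x
  rw [Fin.sum_univ_two] at this
  exact this.symm

lemma coords_ne_zero (b : Basis (Fin 2) ℂ M) {x : M} (hx : x ≠ 0) :
    ¬(b.repr x 0 = 0 ∧ b.repr x 1 = 0) := by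
  rintro ⟨h0, h1⟩
  exact hx (by rw [basis_coords b x, h0, h1]; simp)

lemma exists_dual {ι : Type*} (b : Basis ι ℂ M) {x : M} (hx : x ≠ 0) :
    ∃ φ : M →ₗ[ℂ] ℂ, φ x ≠ 0 := by
  have : b.repr x ≠ 0 := fun h => hx (by simpa using congrArg b.repr.symm h)
  obtain ⟨i, hi⟩ := Finsupp.ne_iff.mp this
  exact ⟨b.coord i, by simpa using hi⟩

lemma tmul_ne_zero' {ι : Type*} (b : Basis ι ℂ M) {x : M} {y : N} (hx : x ≠ 0) (hy : y ≠ 0) :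
    x ⊗ₜ[ℂ] y ≠ 0 := by
  obtain ⟨φ, hφ⟩ := exists_dual b hx
  intro h
  have : kL (N := N) φ (x ⊗ₜ[ℂ] y) = 0 := by rw [h]; simp
  rw [kL_tmul] at this
  exact (smul_ne_zero hφ hy) this


lemma quad_root (α β γ : ℂ) : ∃ s t : ℂ, ¬(s = 0 ∧ t = 0) ∧ α * s ^ 2 + β * (s * t) + γ * t ^ 2 = 0 := by
  by_cases hα : α = 0
  · exact ⟨1, 0, by simp, by simp [hα]⟩
  · obtain ⟨r, hr⟩ := Complex.exists_root (f := Polynomial.C α * Polynomial.X ^ 2 +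
      Polynomial.C β * Polynomial.X + Polynomial.C γ)
      (by rw [Polynomial.degree_quadratic hα]; norm_num)
    refine ⟨r, 1, by simp, ?_⟩
    have : α * r ^ 2 + β * r + γ = 0 := by simpa [Polynomial.IsRoot] using hr
    ring_nf
    ring_nf at this
    linear_combination this

/-- A 2x2 "matrix" tensor with vanishing determinant is a product tensor. -/
lemma det_prod (bM : Basis (Fin 2) ℂ M) (bN : Basis (Fin 2) ℂ N)
    {n00 n01 n10 n11 : ℂ} (h : n00 * n11 = n01 * n10) :
    ∃ (a : M) (c : N), n00 • (bM 0 ⊗ₜ[ℂ] bN 0) + n01 • (bM 0 ⊗ₜ[ℂ] bN 1)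
      + n10 • (bM 1 ⊗ₜ[ℂ] bN 0) + n11 • (bM 1 ⊗ₜ[ℂ] bN 1) = a ⊗ₜ[ℂ] c := by
  by_cases h00 : n00 = 0
  · rcases mul_eq_zero.mp (h ▸ (by rw [h00, zero_mul] : n00 * n11 = 0)) with h01 | h10
    · refine ⟨bM 1, n10 • bN 0 + n11 • bN 1, ?_⟩
      rw [h00, h01]
      simp only [tmul_add, add_tmul, tmul_smul, ← smul_tmul', smul_smul]
      module
    · refine ⟨n01 • bM 0 + n11 • bM 1, bN 1, ?_⟩
      rw [h00, h10]
      simp only [tmul_add, add_tmul, tmul_smul, ← smul_tmul', smul_smul]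
      module
  · refine ⟨bM 0 + (n10 / n00) • bM 1, n00 • bN 0 + n01 • bN 1, ?_⟩
    simp only [tmul_add, add_tmul, tmul_smul, ← smul_tmul', smul_smul]
    match_scalars
    · ring
    · ring
    · field_simp
    · field_simp
      linear_combination h
/-- coordinates of a tensor in M ⊗ N -/
lemma repr4 (bM : Basis (Fin 2) ℂ M) (bN : Basis (Fin 2) ℂ N) (w : M ⊗[ℂ] N) :
    ∃ n : Fin 2 → Fin 2 → ℂ, w = n 0 0 • (bM 0 ⊗ₜ[ℂ] bN 0) + n 0 1 • (bM 0 ⊗ₜ[ℂ] bN 1)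
      + n 1 0 • (bM 1 ⊗ₜ[ℂ] bN 0) + n 1 1 • (bM 1 ⊗ₜ[ℂ] bN 1) := by
  obtain ⟨a0, a1, hw⟩ := decompR bN w
  refine ⟨![![bM.repr a0 0, bM.repr a1 0], ![bM.repr a0 1, bM.repr a1 1]], ?_⟩
  simp only [Matrix.cons_val_zero, Matrix.cons_val_one, Matrix.head_cons]
  conv_lhs => rw [hw, basis_coords bM a0, basis_coords bM a1]
  simp only [tmul_add, add_tmul, tmul_smul, ← smul_tmul', smul_smul]
  module

/-- any pencil of tensors in a (2-dim)⊗(2-dim) space contains a (possibly degenerate) product. -/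
lemma pencil (bM : Basis (Fin 2) ℂ M) (bN : Basis (Fin 2) ℂ N) (w0 w1 : M ⊗[ℂ] N) :
    ∃ (s t : ℂ) (a : M) (c : N), ¬(s = 0 ∧ t = 0) ∧ s • w0 + t • w1 = a ⊗ₜ[ℂ] c := by
  obtain ⟨m, hm⟩ := repr4 bM bN w0
  obtain ⟨m', hm'⟩ := repr4 bM bN w1
  obtain ⟨s, t, hst, hq⟩ := quad_root (m 0 0 * m 1 1 - m 0 1 * m 1 0)
    (m 0 0 * m' 1 1 + m' 0 0 * m 1 1 - m 0 1 * m' 1 0 - m' 0 1 * m 1 0)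
    (m' 0 0 * m' 1 1 - m' 0 1 * m' 1 0)
  have hdet : (s * m 0 0 + t * m' 0 0) * (s * m 1 1 + t * m' 1 1)
      = (s * m 0 1 + t * m' 0 1) * (s * m 1 0 + t * m' 1 0) := by ring_nf; linear_combination hq
  obtain ⟨a, c, hac⟩ := det_prod bM bN hdet
  refine ⟨s, t, a, c, hst, ?_⟩
  rw [hm, hm', ← hac]
  simp only [smul_add, smul_smul]
  module

/-- a 2-dimensional subspace of a (2-dim)⊗(2-dim) space contains a nonzero product tensor. -/
lemma sub2_prod (bM : Basis (Fin 2) ℂ M) (bN : Basis (Fin 2) ℂ N)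
    (S : Submodule ℂ (M ⊗[ℂ] N)) (hS : Module.finrank ℂ S = 2) :
    ∃ (a : M) (c : N), a ≠ 0 ∧ c ≠ 0 ∧ a ⊗ₜ[ℂ] c ∈ S := by
  haveI : FiniteDimensional ℂ S := FiniteDimensional.of_finrank_pos (by rw [hS]; norm_num)
  let bS : Basis (Fin 2) ℂ S := Module.finBasisOfFinrankEq ℂ S hS
  obtain ⟨s, t, a, c, hst, hac⟩ := pencil bM bN (bS 0 : M ⊗[ℂ] N) (bS 1 : M ⊗[ℂ] N)
  have hmem : a ⊗ₜ[ℂ] c ∈ S := by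
    rw [← hac]
    exact S.add_mem (S.smul_mem s (bS 0).2) (S.smul_mem t (bS 1).2)
  have hcomb : (↑(s • bS 0 + t • bS 1) : M ⊗[ℂ] N) = a ⊗ₜ[ℂ] c := by
    push_cast
    exact hac
  have hne : s • bS 0 + t • bS 1 ≠ 0 := by
    intro h0
    exact hst (basis_lin2 bS h0)
  have hac_ne : a ⊗ₜ[ℂ] c ≠ 0 := by
    rw [← hcomb]
    simp only [ne_eq, Submodule.coe_eq_zero]
    exact hne
  have ha : a ≠ 0 := by rintro rfl; simp at hac_ne
  have hc : c ≠ 0 := by rintro rfl; simp at hac_ne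
  exact ⟨a, c, ha, hc, hmem⟩


lemma exists_dual_one {ι : Type*} (b : Basis ι ℂ M) {x : M} (hx : x ≠ 0) :
    ∃ φ : M →ₗ[ℂ] ℂ, φ x = 1 := by
  obtain ⟨φ, hφ⟩ := exists_dual b hx
  exact ⟨(φ x)⁻¹ • φ, by simp [inv_mul_cancel₀ hφ]⟩

lemma sepR (bN : Basis (Fin 2) ℂ N) {u : M ⊗[ℂ] N}
    (h : ∀ ψ : N →ₗ[ℂ] ℂ, kR ψ u = 0) : u = 0 := by
  obtain ⟨a0, a1, hu⟩ := decompR bN u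
  have h0 := h (bN.coord 0)
  have h1 := h (bN.coord 1)
  rw [hu] at h0 h1 ⊢
  simp only [map_add, kR_tmul, Basis.coord_apply, Basis.repr_self] at h0 h1
  simp only [Finsupp.single_eq_same, Finsupp.single_apply] at h0 h1
  norm_num at h0 h1
  rw [h0, h1]
  simp

lemma sepL (bM : Basis (Fin 2) ℂ M) {u : M ⊗[ℂ] N}
    (h : ∀ χ : M →ₗ[ℂ] ℂ, kL χ u = 0) : u = 0 := by
  obtain ⟨c0, c1, hu⟩ := decompL bM u
  have h0 := h (bM.coord 0)
  have h1 := h (bM.coord 1)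
  rw [hu] at h0 h1 ⊢
  simp only [map_add, kL_tmul, Basis.coord_apply, Basis.repr_self] at h0 h1
  simp only [Finsupp.single_eq_same, Finsupp.single_apply] at h0 h1
  norm_num at h0 h1
  rw [h0, h1]
  simp

/-- if every functional annihilating `x` annihilates `u` (on the right factor), then
`u = a ⊗ x`. -/
lemma structR (bN : Basis (Fin 2) ℂ N) {u : M ⊗[ℂ] N} {x : N} (hx : x ≠ 0)
    (h : ∀ ψ : N →ₗ[ℂ] ℂ, ψ x = 0 → kR ψ u = 0) : ∃ a : M, u = a ⊗ₜ[ℂ] x := by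
  obtain ⟨a0, a1, hu⟩ := decompR bN u
  set c0 := bN.repr x 0 with hc0
  set c1 := bN.repr x 1 with hc1
  have hxc : x = c0 • bN 0 + c1 • bN 1 := basis_coords bN x
  have hψ : (c1 • bN.coord 0 - c0 • bN.coord 1) x = 0 := by
    simp only [LinearMap.sub_apply, LinearMap.smul_apply, Basis.coord_apply, smul_eq_mul]
    ring
  have hk := h _ hψ
  rw [hu] at hk
  simp only [map_add, map_sub, map_smul, kR_tmul, LinearMap.sub_apply, LinearMap.smul_apply,
    Basis.coord_apply, Basis.repr_self] at hk
  simp only [Finsupp.single_eq_same, Finsupp.single_apply] at hk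
  norm_num at hk
  have h' : c1 • a0 = c0 • a1 := by linear_combination (norm := module) hk
  by_cases h0 : c0 = 0
  · have hc1ne : c1 ≠ 0 := by
      intro h1
      exact (coords_ne_zero bN hx) ⟨h0 ▸ rfl, h1 ▸ rfl⟩
    have ha0 : a0 = 0 := by
      have hz : c1 • a0 = 0 := by rw [h', h0, zero_smul]
      exact (smul_eq_zero.mp hz).resolve_left hc1ne
    refine ⟨c1⁻¹ • a1, ?_⟩
    rw [hu, hxc, ha0, h0]
    simp only [tmul_add, tmul_smul, ← smul_tmul', smul_smul, zero_tmul, tmul_zero,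
      zero_smul, smul_zero, zero_add, add_zero]
    rw [mul_inv_cancel₀ hc1ne, one_smul]
  · refine ⟨c0⁻¹ • a0, ?_⟩
    have key : (c0⁻¹ * c1) • a0 = a1 := by
      rw [mul_smul, h', smul_smul, inv_mul_cancel₀ h0, one_smul]
    rw [hu, hxc]
    conv_lhs => rw [← key]
    simp only [tmul_add, tmul_smul, ← smul_tmul', smul_smul]
    match_scalars
    · field_simp
    · ring

/-- symmetric version: `u = x ⊗ c`. -/
lemma structL (bM : Basis (Fin 2) ℂ M) {u : M ⊗[ℂ] N} {x : M} (hx : x ≠ 0)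
    (h : ∀ χ : M →ₗ[ℂ] ℂ, χ x = 0 → kL χ u = 0) : ∃ c : N, u = x ⊗ₜ[ℂ] c := by
  obtain ⟨c0', c1', hu⟩ := decompL bM u
  set c0 := bM.repr x 0 with hc0
  set c1 := bM.repr x 1 with hc1
  have hxc : x = c0 • bM 0 + c1 • bM 1 := basis_coords bM x
  have hχ : (c1 • bM.coord 0 - c0 • bM.coord 1) x = 0 := by
    simp only [LinearMap.sub_apply, LinearMap.smul_apply, Basis.coord_apply, smul_eq_mul]
    ring
  have hk := h _ hχ
  rw [hu] at hk
  simp only [map_add, map_sub, map_smul, kL_tmul, LinearMap.sub_apply, LinearMap.smul_apply,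
    Basis.coord_apply, Basis.repr_self] at hk
  simp only [Finsupp.single_eq_same, Finsupp.single_apply] at hk
  norm_num at hk
  have h' : c1 • c0' = c0 • c1' := by linear_combination (norm := module) hk
  by_cases h0 : c0 = 0
  · have hc1ne : c1 ≠ 0 := by
      intro h1
      exact (coords_ne_zero bM hx) ⟨h0 ▸ rfl, h1 ▸ rfl⟩
    have ha0 : c0' = 0 := by
      have hz : c1 • c0' = 0 := by rw [h', h0, zero_smul]
      exact (smul_eq_zero.mp hz).resolve_left hc1ne
    refine ⟨c1⁻¹ • c1', ?_⟩
    rw [hu, hxc, ha0, h0]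
    simp only [add_tmul, tmul_smul, ← smul_tmul', smul_smul, zero_tmul, tmul_zero,
      zero_smul, smul_zero, zero_add, add_zero]
    rw [inv_mul_cancel₀ hc1ne, one_smul]
  · refine ⟨c0⁻¹ • c0', ?_⟩
    have key : (c0⁻¹ * c1) • c0' = c1' := by
      rw [mul_smul, h', smul_smul, inv_mul_cancel₀ h0, one_smul]
    rw [hu, hxc]
    conv_lhs => rw [← key]
    simp only [add_tmul, tmul_smul, ← smul_tmul', smul_smul]
    match_scalars
    · field_simp
    · ring

/-- dual pair for two independent vectors in a 2-dimensional space. -/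
lemma pair_dual {x y : M} (hdim : Module.finrank ℂ M = 2)
    (h : LinearIndependent ℂ ![x, y]) :
    ∃ χ χ' : M →ₗ[ℂ] ℂ, χ x = 1 ∧ χ y = 0 ∧ χ' x = 0 ∧ χ' y = 1 := by
  haveI : FiniteDimensional ℂ M := FiniteDimensional.of_finrank_pos (by rw [hdim]; norm_num)
  let B : Basis (Fin 2) ℂ M := basisOfLinearIndependentOfCardEqFinrank h (by simpa using hdim.symm)
  have hB0 : B 0 = x := by rw [coe_basisOfLinearIndependentOfCardEqFinrank]; rfl
  have hB1 : B 1 = y := by rw [coe_basisOfLinearIndependentOfCardEqFinrank]; rfl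
  refine ⟨B.coord 0, B.coord 1, ?_, ?_, ?_, ?_⟩ <;>
    simp only [← hB0, ← hB1, Basis.coord_apply, Basis.repr_self] <;> simp

end Aux

section Triple
variable {L1 L2 L3 : Type*} [AddCommGroup L1] [Module ℂ L1]
    [AddCommGroup L2] [Module ℂ L2] [AddCommGroup L3] [Module ℂ L3]

/-- insert `x : L2` in the middle: `a ⊗ c ↦ (a ⊗ x) ⊗ c`. -/
noncomputable def gmap (L1 L3 : Type*) [AddCommGroup L1] [Module ℂ L1]
    [AddCommGroup L3] [Module ℂ L3] (x : L2) :
    L1 ⊗[ℂ] L3 →ₗ[ℂ] (L1 ⊗[ℂ] L2) ⊗[ℂ] L3 :=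
  LinearMap.rTensor L3 ((TensorProduct.mk ℂ L1 L2).flip x)

@[simp] lemma gmap_tmul (x : L2) (a : L1) (c : L3) :
    gmap L1 L3 x (a ⊗ₜ[ℂ] c) = (a ⊗ₜ[ℂ] x) ⊗ₜ[ℂ] c := by
  simp [gmap]

lemma gmap_smul_left (p : ℂ) (x : L2) (u : L1 ⊗[ℂ] L3) :
    gmap L1 L3 (p • x) u = p • gmap L1 L3 x u := by
  induction u using TensorProduct.induction_on with
  | zero => simp
  | tmul a c => simp [tmul_smul, smul_tmul']
  | add y z hy hz => simp [map_add, hy, hz]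

lemma gmap_add_left (x y : L2) (u : L1 ⊗[ℂ] L3) :
    gmap L1 L3 (x + y) u = gmap L1 L3 x u + gmap L1 L3 y u := by
  induction u using TensorProduct.induction_on with
  | zero => simp
  | tmul a c => simp [tmul_add, add_tmul]
  | add z w hz hw =>
    simp only [map_add, hz, hw]
    abel

lemma gslices (b2 : Basis (Fin 2) ℂ L2) (v : (L1 ⊗[ℂ] L2) ⊗[ℂ] L3) :
    ∃ w0 w1 : L1 ⊗[ℂ] L3, v = gmap L1 L3 (b2 0) w0 + gmap L1 L3 (b2 1) w1 := by
  induction v using TensorProduct.induction_on with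
  | zero => exact ⟨0, 0, by simp⟩
  | tmul p c =>
    induction p using TensorProduct.induction_on with
    | zero => exact ⟨0, 0, by simp⟩
    | tmul a b =>
      refine ⟨b2.repr b 0 • a ⊗ₜ[ℂ] c, b2.repr b 1 • a ⊗ₜ[ℂ] c, ?_⟩
      conv_lhs => rw [basis_coords b2 b]
      simp only [map_smul, gmap_tmul, tmul_add, add_tmul, tmul_smul, ← smul_tmul', smul_smul]
      try module
    | add p q hp hq =>
      obtain ⟨w0, w1, hp⟩ := hp
      obtain ⟨z0, z1, hq⟩ := hq
      refine ⟨w0 + z0, w1 + z1, ?_⟩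
      rw [add_tmul, hp, hq]
      simp only [map_add]
      abel
  | add y z hy hz =>
    obtain ⟨w0, w1, hy⟩ := hy
    obtain ⟨z0, z1, hz⟩ := hz
    refine ⟨w0 + z0, w1 + z1, ?_⟩
    rw [hy, hz]
    simp only [map_add]
    abel

lemma kR_gmap (ψ : L3 →ₗ[ℂ] ℂ) (x : L2) (u : L1 ⊗[ℂ] L3) :
    kR ψ (gmap L1 L3 x u) = (kR ψ u) ⊗ₜ[ℂ] x := by
  induction u using TensorProduct.induction_on with
  | zero => simp
  | tmul a c => simp [smul_tmul']
  | add y z hy hz => simp [map_add, hy, hz, add_tmul]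

lemma kL_assoc_gmap (χ : L1 →ₗ[ℂ] ℂ) (x : L2) (u : L1 ⊗[ℂ] L3) :
    kL χ ((TensorProduct.assoc ℂ L1 L2 L3) (gmap L1 L3 x u)) = x ⊗ₜ[ℂ] (kL χ u) := by
  induction u using TensorProduct.induction_on with
  | zero => simp
  | tmul a c => simp [assoc_tmul, tmul_smul]
  | add y z hy hz => simp [map_add, hy, hz, tmul_add]

lemma memL12 {L12 : Submodule ℂ (L1 ⊗[ℂ] L2)} {v : (L1 ⊗[ℂ] L2) ⊗[ℂ] L3}
    (hv : v ∈ leftTensorSub (L3 := L3) L12) (ψ : L3 →ₗ[ℂ] ℂ) : kR ψ v ∈ L12 := by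
  obtain ⟨w, rfl⟩ := hv
  induction w using TensorProduct.induction_on with
  | zero => simp
  | tmul a b =>
    simp only [TensorProduct.mapIncl, TensorProduct.map_tmul, Submodule.coe_subtype, kR_tmul]
    exact L12.smul_mem _ a.2
  | add y z hy hz =>
    rw [map_add, map_add]
    exact L12.add_mem hy hz

lemma memL23 {L23 : Submodule ℂ (L2 ⊗[ℂ] L3)} {v : (L1 ⊗[ℂ] L2) ⊗[ℂ] L3}
    (hv : v ∈ rightTensorSub (L1 := L1) L23) (χ : L1 →ₗ[ℂ] ℂ) :
    kL χ ((TensorProduct.assoc ℂ L1 L2 L3) v) ∈ L23 := by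
  have claim : ∀ z : (⊤ : Submodule ℂ L1) ⊗[ℂ] L23,
      kL χ ((TensorProduct.mapIncl (⊤ : Submodule ℂ L1) L23) z) ∈ L23 := by
    intro z
    induction z using TensorProduct.induction_on with
    | zero => simp
    | tmul a b =>
      simp only [TensorProduct.mapIncl, TensorProduct.map_tmul, Submodule.coe_subtype, kL_tmul]
      exact L23.smul_mem _ b.2
    | add y z hy hz =>
      rw [map_add, map_add]
      exact L23.add_mem hy hz
  obtain ⟨w, hw, rfl⟩ := hv
  obtain ⟨z, rfl⟩ := hw
  have heq : (TensorProduct.assoc ℂ L1 L2 L3) ((TensorProduct.assoc ℂ L1 L2 L3).symm.toLinearMap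
      ((TensorProduct.mapIncl (⊤ : Submodule ℂ L1) L23) z))
      = (TensorProduct.mapIncl (⊤ : Submodule ℂ L1) L23) z := by
    simp
  rw [heq]
  exact claim z

end Triple

section Main
variable {L1 L2 L3 : Type*} [AddCommGroup L1] [Module ℂ L1]
    [AddCommGroup L2] [Module ℂ L2] [AddCommGroup L3] [Module ℂ L3]

lemma finish_triple (b1 : Basis (Fin 2) ℂ L1) (b2 : Basis (Fin 2) ℂ L2)
    {L12 : Submodule ℂ (L1 ⊗[ℂ] L2)} {L23 : Submodule ℂ (L2 ⊗[ℂ] L3)}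
    {z1 : L1} {z2 : L2} {z3 : L3} (hz1 : z1 ≠ 0) (hz2 : z2 ≠ 0) (hz3 : z3 ≠ 0)
    (m12 : z1 ⊗ₜ[ℂ] z2 ∈ L12) (m23 : z2 ⊗ₜ[ℂ] z3 ∈ L23) :
    ∃ (x1 : L1) (x2 : L2) (x3 : L3), x1 ≠ 0 ∧ x2 ≠ 0 ∧ x3 ≠ 0 ∧
      x1 ⊗ₜ[ℂ] x2 ∈ L12 ∧ x2 ⊗ₜ[ℂ] x3 ∈ L23 ∧
      (x1 ⊗ₜ[ℂ] x2) ⊗ₜ[ℂ] x3 ≠ 0 ∧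
      (x1 ⊗ₜ[ℂ] x2) ⊗ₜ[ℂ] x3 ∈ leftTensorSub (L3 := L3) L12 ⊓ rightTensorSub (L1 := L1) L23 := by
  have h12ne : z1 ⊗ₜ[ℂ] z2 ≠ 0 := tmul_ne_zero' b1 hz1 hz2
  have hprodne : (z1 ⊗ₜ[ℂ] z2) ⊗ₜ[ℂ] z3 ≠ 0 :=
    tmul_ne_zero' (b1.tensorProduct b2) h12ne hz3
  refine ⟨z1, z2, z3, hz1, hz2, hz3, m12, m23, hprodne, ?_, ?_⟩
  · exact ⟨(⟨z1 ⊗ₜ[ℂ] z2, m12⟩ : L12) ⊗ₜ[ℂ] (⟨z3, Submodule.mem_top⟩ : (⊤ : Submodule ℂ L3)),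
      by simp [TensorProduct.mapIncl]⟩
  · refine ⟨z1 ⊗ₜ[ℂ] (z2 ⊗ₜ[ℂ] z3), ⟨(⟨z1, Submodule.mem_top⟩ : (⊤ : Submodule ℂ L1)) ⊗ₜ[ℂ]
      (⟨z2 ⊗ₜ[ℂ] z3, m23⟩ : L23), by simp [TensorProduct.mapIncl]⟩, ?_⟩
    exact TensorProduct.assoc_symm_tmul z1 z2 z3

lemma core (h1 : Module.finrank ℂ L1 = 2) (h3 : Module.finrank ℂ L3 = 2)
    (b1 : Basis (Fin 2) ℂ L1) (b2 : Basis (Fin 2) ℂ L2) (b3 : Basis (Fin 2) ℂ L3)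
    (L12 : Submodule ℂ (L1 ⊗[ℂ] L2)) (L23 : Submodule ℂ (L2 ⊗[ℂ] L3))
    (h12 : Module.finrank ℂ L12 = 2) (h23 : Module.finrank ℂ L23 = 2)
    (v : (L1 ⊗[ℂ] L2) ⊗[ℂ] L3)
    (hvL : v ∈ leftTensorSub (L3 := L3) L12) (hvR : v ∈ rightTensorSub (L1 := L1) L23)
    (hv0 : v ≠ 0) (x2 y2 : L2) (u : L1 ⊗[ℂ] L3) (x1 : L1) (x3 : L3)
    (hdecomp : v = gmap L1 L3 x2 u + gmap L1 L3 y2 (x1 ⊗ₜ[ℂ] x3))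
    (hx2 : x2 ≠ 0) (hindep : ∀ μ : ℂ, μ • x2 + y2 ≠ 0)
    (hspan : ∀ z : L2, ∃ p q : ℂ, z = p • x2 + q • y2) :
    ∃ (x1 : L1) (x2 : L2) (x3 : L3), x1 ≠ 0 ∧ x2 ≠ 0 ∧ x3 ≠ 0 ∧
      x1 ⊗ₜ[ℂ] x2 ∈ L12 ∧ x2 ⊗ₜ[ℂ] x3 ∈ L23 ∧
      (x1 ⊗ₜ[ℂ] x2) ⊗ₜ[ℂ] x3 ≠ 0 ∧
      (x1 ⊗ₜ[ℂ] x2) ⊗ₜ[ℂ] x3 ∈ leftTensorSub (L3 := L3) L12 ⊓ rightTensorSub (L1 := L1) L23 := by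
  have hC3 : ∀ ψ : L3 →ₗ[ℂ] ℂ, kR ψ v = (kR ψ u) ⊗ₜ[ℂ] x2 + ψ x3 • (x1 ⊗ₜ[ℂ] y2) := by
    intro ψ
    rw [hdecomp, map_add, kR_gmap, kR_gmap, kR_tmul, ← smul_tmul']
  have hC1 : ∀ χ : L1 →ₗ[ℂ] ℂ, kL χ ((TensorProduct.assoc ℂ L1 L2 L3) v)
      = x2 ⊗ₜ[ℂ] (kL χ u) + χ x1 • (y2 ⊗ₜ[ℂ] x3) := by
    intro χ
    rw [hdecomp, map_add, map_add, kL_assoc_gmap, kL_assoc_gmap, kL_tmul, tmul_smul]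
  have hm3 : ∀ ψ : L3 →ₗ[ℂ] ℂ, (kR ψ u) ⊗ₜ[ℂ] x2 + ψ x3 • (x1 ⊗ₜ[ℂ] y2) ∈ L12 := by
    intro ψ
    have := memL12 hvL ψ
    rwa [hC3 ψ] at this
  have hm1 : ∀ χ : L1 →ₗ[ℂ] ℂ, x2 ⊗ₜ[ℂ] (kL χ u) + χ x1 • (y2 ⊗ₜ[ℂ] x3) ∈ L23 := by
    intro χ
    have := memL23 hvR χ
    rwa [hC1 χ] at this
  by_cases hz : x1 = 0 ∨ x3 = 0
  · -- degenerate case: the product slice vanishes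
    have hterm : x1 ⊗ₜ[ℂ] x3 = 0 := by
      rcases hz with h | h <;> rw [h] <;> simp
    have hu0 : u ≠ 0 := by
      intro h
      exact hv0 (by rw [hdecomp, h, hterm]; simp)
    have hex3 : ∃ ψ : L3 →ₗ[ℂ] ℂ, kR ψ u ≠ 0 := by
      by_contra hc
      push_neg at hc
      exact hu0 (sepR b3 fun ψ => hc ψ)
    have hex1 : ∃ χ : L1 →ₗ[ℂ] ℂ, kL χ u ≠ 0 := by
      by_contra hc
      push_neg at hc
      exact hu0 (sepL b1 fun χ => hc χ)
    obtain ⟨ψ, hψ⟩ := hex3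
    obtain ⟨χ, hχ⟩ := hex1
    have hzero3 : ψ x3 • (x1 ⊗ₜ[ℂ] y2) = 0 := by
      rcases hz with h | h <;> rw [h] <;> simp
    have hzero1 : χ x1 • (y2 ⊗ₜ[ℂ] x3) = 0 := by
      rcases hz with h | h <;> rw [h] <;> simp
    have m12 : (kR ψ u) ⊗ₜ[ℂ] x2 ∈ L12 := by
      have := hm3 ψ
      rwa [hzero3, add_zero] at this
    have m23 : x2 ⊗ₜ[ℂ] (kL χ u) ∈ L23 := by
      have := hm1 χ
      rwa [hzero1, add_zero] at this
    exact finish_triple b1 b2 hψ hx2 hχ m12 m23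
  · push_neg at hz
    obtain ⟨hx1, hx3⟩ := hz
    by_cases hP3 : ∃ ψ : L3 →ₗ[ℂ] ℂ, ψ x3 = 0 ∧ kR ψ u ≠ 0
    · by_cases hP1 : ∃ χ : L1 →ₗ[ℂ] ℂ, χ x1 = 0 ∧ kL χ u ≠ 0
      · -- case A
        obtain ⟨ψ, hψ3, hψ⟩ := hP3
        obtain ⟨χ, hχ1, hχ⟩ := hP1
        have m12 : (kR ψ u) ⊗ₜ[ℂ] x2 ∈ L12 := by
          have := hm3 ψ
          rwa [hψ3, zero_smul, add_zero] at this
        have m23 : x2 ⊗ₜ[ℂ] (kL χ u) ∈ L23 := by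
          have := hm1 χ
          rwa [hχ1, zero_smul, add_zero] at this
        exact finish_triple b1 b2 hψ hx2 hχ m12 m23
      · -- case C : u = x1 ⊗ c
        push_neg at hP1
        obtain ⟨c, hu⟩ := structL b1 hx1 (fun χ hχ => hP1 χ hχ)
        by_cases hdep : ∃ μ : ℂ, c = μ • x3
        · obtain ⟨μ, rfl⟩ := hdep
          obtain ⟨ψ0, hψ0⟩ := exists_dual_one b3 hx3
          obtain ⟨χ0, hχ0⟩ := exists_dual_one b1 hx1
          set z2 := μ • x2 + y2 with hz2def
          have hz2 : z2 ≠ 0 := hindep μ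
          have m12 : x1 ⊗ₜ[ℂ] z2 ∈ L12 := by
            have h := hm3 ψ0
            have e : (kR ψ0 u) ⊗ₜ[ℂ] x2 + ψ0 x3 • (x1 ⊗ₜ[ℂ] y2) = x1 ⊗ₜ[ℂ] z2 := by
              rw [hu, kR_tmul, map_smul, hψ0, hz2def]
              simp only [smul_eq_mul, mul_one, tmul_add, tmul_smul, ← smul_tmul', smul_smul,
                one_smul]
              try module
            rwa [e] at h
          have m23 : z2 ⊗ₜ[ℂ] x3 ∈ L23 := by
            have h := hm1 χ0
            have e : x2 ⊗ₜ[ℂ] (kL χ0 u) + χ0 x1 • (y2 ⊗ₜ[ℂ] x3) = z2 ⊗ₜ[ℂ] x3 := by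
              rw [hu, kL_tmul, hχ0, hz2def]
              simp only [one_smul, tmul_smul, add_tmul, ← smul_tmul', smul_smul]
              try module
            rwa [e] at h
          exact finish_triple b1 b2 hx1 hz2 hx3 m12 m23
        · -- c, x3 independent
          push_neg at hdep
          have hLI : LinearIndependent ℂ ![c, x3] := by
            rw [linearIndependent_fin2]
            refine ⟨by simpa using hx3, fun μ h => ?_⟩
            simp only [Matrix.cons_val_one, Matrix.head_cons, Matrix.cons_val_zero] at h
            exact hdep μ h.symm
          obtain ⟨ψ, ψ', hψc, hψ3, hψ'c, hψ'3⟩ := pair_dual h3 hLI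
          have m12a : x1 ⊗ₜ[ℂ] x2 ∈ L12 := by
            have h := hm3 ψ
            have e : (kR ψ u) ⊗ₜ[ℂ] x2 + ψ x3 • (x1 ⊗ₜ[ℂ] y2) = x1 ⊗ₜ[ℂ] x2 := by
              rw [hu, kR_tmul, hψc, hψ3, one_smul, zero_smul, add_zero]
            rwa [e] at h
          have m12b : x1 ⊗ₜ[ℂ] y2 ∈ L12 := by
            have h := hm3 ψ'
            have e : (kR ψ' u) ⊗ₜ[ℂ] x2 + ψ' x3 • (x1 ⊗ₜ[ℂ] y2) = x1 ⊗ₜ[ℂ] y2 := by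
              rw [hu, kR_tmul, hψ'c, hψ'3, zero_smul, zero_tmul, one_smul, zero_add]
            rwa [e] at h
          obtain ⟨z2, z3, hz2, hz3, m23⟩ := sub2_prod b2 b3 L23 h23
          obtain ⟨p, q, hz2pq⟩ := hspan z2
          have m12 : x1 ⊗ₜ[ℂ] z2 ∈ L12 := by
            rw [hz2pq, tmul_add, tmul_smul, tmul_smul]
            exact L12.add_mem (L12.smul_mem p m12a) (L12.smul_mem q m12b)
          exact finish_triple b1 b2 hx1 hz2 hz3 m12 m23
    · -- case B : u = a ⊗ x3
      push_neg at hP3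
      obtain ⟨a, hu⟩ := structR b3 hx3 (fun ψ hψ => hP3 ψ hψ)
      by_cases hdep : ∃ μ : ℂ, a = μ • x1
      · obtain ⟨μ, rfl⟩ := hdep
        obtain ⟨ψ0, hψ0⟩ := exists_dual_one b3 hx3
        obtain ⟨χ0, hχ0⟩ := exists_dual_one b1 hx1
        set z2 := μ • x2 + y2 with hz2def
        have hz2 : z2 ≠ 0 := hindep μ
        have m12 : x1 ⊗ₜ[ℂ] z2 ∈ L12 := by
          have h := hm3 ψ0
          have e : (kR ψ0 u) ⊗ₜ[ℂ] x2 + ψ0 x3 • (x1 ⊗ₜ[ℂ] y2) = x1 ⊗ₜ[ℂ] z2 := by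
            rw [hu, kR_tmul, hψ0, hz2def]
            simp only [one_smul, tmul_add, tmul_smul, ← smul_tmul', smul_smul]
            try module
          rwa [e] at h
        have m23 : z2 ⊗ₜ[ℂ] x3 ∈ L23 := by
          have h := hm1 χ0
          have e : x2 ⊗ₜ[ℂ] (kL χ0 u) + χ0 x1 • (y2 ⊗ₜ[ℂ] x3) = z2 ⊗ₜ[ℂ] x3 := by
            rw [hu, kL_tmul, map_smul, hχ0, hz2def]
            simp only [smul_eq_mul, mul_one, one_smul, tmul_smul, add_tmul, ← smul_tmul',
              smul_smul]
            try module
          rwa [e] at h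
        exact finish_triple b1 b2 hx1 hz2 hx3 m12 m23
      · -- a, x1 independent
        push_neg at hdep
        have hLI : LinearIndependent ℂ ![a, x1] := by
          rw [linearIndependent_fin2]
          refine ⟨by simpa using hx1, fun μ h => ?_⟩
          simp only [Matrix.cons_val_one, Matrix.head_cons, Matrix.cons_val_zero] at h
          exact hdep μ h.symm
        obtain ⟨χ, χ', hχa, hχ1, hχ'a, hχ'1⟩ := pair_dual h1 hLI
        have m23a : x2 ⊗ₜ[ℂ] x3 ∈ L23 := by
          have h := hm1 χ
          have e : x2 ⊗ₜ[ℂ] (kL χ u) + χ x1 • (y2 ⊗ₜ[ℂ] x3) = x2 ⊗ₜ[ℂ] x3 := by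
            rw [hu, kL_tmul, hχa, hχ1, one_smul, zero_smul, add_zero]
          rwa [e] at h
        have m23b : y2 ⊗ₜ[ℂ] x3 ∈ L23 := by
          have h := hm1 χ'
          have e : x2 ⊗ₜ[ℂ] (kL χ' u) + χ' x1 • (y2 ⊗ₜ[ℂ] x3) = y2 ⊗ₜ[ℂ] x3 := by
            rw [hu, kL_tmul, hχ'a, hχ'1, zero_smul, tmul_zero, one_smul, zero_add]
          rwa [e] at h
        obtain ⟨z1, z2, hz1, hz2, m12⟩ := sub2_prod b1 b2 L12 h12
        obtain ⟨p, q, hz2pq⟩ := hspan z2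
        have m23 : z2 ⊗ₜ[ℂ] x3 ∈ L23 := by
          rw [hz2pq, add_tmul, ← smul_tmul', ← smul_tmul']
          exact L23.add_mem (L23.smul_mem p m23a) (L23.smul_mem q m23b)
        exact finish_triple b1 b2 hz1 hz2 hx3 m12 m23
end Main


theorem stmt_0 {L1 L2 L3 : Type*} [AddCommGroup L1] [Module ℂ L1]
    [AddCommGroup L2] [Module ℂ L2] [AddCommGroup L3] [Module ℂ L3]
    (h1 : Module.finrank ℂ L1 = 2) (h2 : Module.finrank ℂ L2 = 2)
    (h3 : Module.finrank ℂ L3 = 2)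
    (L12 : Submodule ℂ (L1 ⊗[ℂ] L2)) (L23 : Submodule ℂ (L2 ⊗[ℂ] L3))
    (h12 : Module.finrank ℂ L12 = 2) (h23 : Module.finrank ℂ L23 = 2)
    (hne : ∃ v ∈ leftTensorSub (L3 := L3) L12 ⊓ rightTensorSub (L1 := L1) L23, v ≠ 0) :
    ∃ (x1 : L1) (x2 : L2) (x3 : L3), x1 ≠ 0 ∧ x2 ≠ 0 ∧ x3 ≠ 0 ∧
      x1 ⊗ₜ[ℂ] x2 ∈ L12 ∧ x2 ⊗ₜ[ℂ] x3 ∈ L23 ∧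
      (x1 ⊗ₜ[ℂ] x2) ⊗ₜ[ℂ] x3 ≠ 0 ∧
      (x1 ⊗ₜ[ℂ] x2) ⊗ₜ[ℂ] x3 ∈ leftTensorSub (L3 := L3) L12 ⊓ rightTensorSub (L1 := L1) L23 := by
  haveI : FiniteDimensional ℂ L1 := FiniteDimensional.of_finrank_pos (by rw [h1]; norm_num)
  haveI : FiniteDimensional ℂ L2 := FiniteDimensional.of_finrank_pos (by rw [h2]; norm_num)
  haveI : FiniteDimensional ℂ L3 := FiniteDimensional.of_finrank_pos (by rw [h3]; norm_num)
  let b1 : Basis (Fin 2) ℂ L1 := Module.finBasisOfFinrankEq ℂ L1 h1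
  let b2 : Basis (Fin 2) ℂ L2 := Module.finBasisOfFinrankEq ℂ L2 h2
  let b3 : Basis (Fin 2) ℂ L3 := Module.finBasisOfFinrankEq ℂ L3 h3
  obtain ⟨v, hv, hv0⟩ := hne
  obtain ⟨hvL, hvR⟩ := hv
  obtain ⟨w0, w1, hslices⟩ := gslices b2 v
  obtain ⟨s, t, x1, x3, hst, hprod⟩ := pencil b1 b3 w0 w1
  by_cases hs : s = 0
  · have ht : t ≠ 0 := fun h => hst ⟨hs, h⟩
    refine core h1 h3 b1 b2 b3 L12 L23 h12 h23 v hvL hvR hv0 (t • b2 0) (t⁻¹ • b2 1)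
      (t⁻¹ • w0) x1 x3 ?_ ?_ ?_ ?_
    · rw [hslices, ← hprod, hs]
      simp only [zero_smul, zero_add, gmap_smul_left, map_smul, smul_smul]
      match_scalars <;> field_simp
    · exact smul_ne_zero ht (b2.ne_zero 0)
    · intro μ h
      have h' : (μ * t) • b2 0 + t⁻¹ • b2 1 = 0 := by
        linear_combination (norm := module) h
      obtain ⟨e1, e2⟩ := basis_lin2 b2 h'
      exact inv_ne_zero ht e2
    · intro z
      refine ⟨t⁻¹ * b2.repr z 0, t * b2.repr z 1, ?_⟩
      conv_lhs => rw [basis_coords b2 z]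
      simp only [smul_smul]
      match_scalars <;> field_simp
  · refine core h1 h3 b1 b2 b3 L12 L23 h12 h23 v hvL hvR hv0 (t • b2 0 + (-s) • b2 1)
      (s⁻¹ • b2 0) ((-s⁻¹) • w1) x1 x3 ?_ ?_ ?_ ?_
    · rw [hslices, ← hprod]
      simp only [gmap_add_left, gmap_smul_left, map_smul, map_add, smul_smul, smul_add]
      match_scalars <;> field_simp <;> ring
    · intro h
      obtain ⟨e1, e2⟩ := basis_lin2 b2 h
      exact hs (neg_eq_zero.mp e2)
    · intro μ h
      have h' : (μ * t + s⁻¹) • b2 0 + (μ * (-s)) • b2 1 = 0 := by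
        linear_combination (norm := module) h
      obtain ⟨e1, e2⟩ := basis_lin2 b2 h'
      have hμ : μ = 0 := by
        rcases mul_eq_zero.mp e2 with h0 | h0
        · exact h0
        · exact absurd (neg_eq_zero.mp h0) hs
      rw [hμ, zero_mul, zero_add] at e1
      exact inv_ne_zero hs e1
    · intro z
      refine ⟨-(s⁻¹) * b2.repr z 1, s * b2.repr z 0 + t * b2.repr z 1, ?_⟩
      conv_lhs => rw [basis_coords b2 z]
      simp only [smul_add, smul_smul]
      match_scalars <;> field_simp <;> ring
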